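/- Let $x$ have mean $0$ and positive finite variance, and fix $\widetilde z\in(-1,1)$ and $\widetilde{xz}$ with $0<\widetilde{xz}<\widetilde{xz}_{\max}(\widetilde z)$. Suppose $p(x)=\ell\mathbf{1}(x<t)+\delta\mathbf{1}(x=t)+\mathbf{1}(x>t)$ and $p'(x)=\ell'\mathbf{1}(x<t)+\delta'\mathbf{1}(x=t)+\mathbf{1}(x>t)$ (same threshold $t$) both satisfy $\mathbb{E}(p(x))=\mathbb{E}(p'(x))$ and $\mathbb{E}(x\,p(x))=\mathbb{E}(x\,p'(x))$, with $\ell\le\delta\le1$ and $\ell'\le\delta'\le1$, $\ell,\ell'\in(0,1)$. Then $p=p'$ almost surely under the law of $x$. -/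

import Mathlib

open MeasureTheory Set

/-- Same-threshold uniqueness of the optimal monotone two-level design:
two feasible designs of the form `ℓ 1(x<t) + δ 1(x=t) + 1(x>t)` with the same
threshold and the same first two moments coincide almost surely. -/
theorem stmt11 (μ : Measure ℝ) [IsProbabilityMeasure μ]
    (hmean : ∫ x, x ∂μ = 0)
    (hint2 : Integrable (fun x : ℝ => x^2) μ)
    (hvar : 0 < ∫ x, x^2 ∂μ)
    (zt xzt : ℝ) (hz : zt ∈ Ioo (-1:ℝ) 1)
    (hxzpos : 0 < xzt)
    (hxzmax : xzt < sSup {y : ℝ | ∃ q : ℝ → ℝ, Measurable q ∧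
      (∀ x, q x ∈ Icc (0:ℝ) 1) ∧ ∫ x, q x ∂μ = (1 + zt)/2 ∧
      y = 2 * ∫ x, x * q x ∂μ})
    (t l d l' d' : ℝ)
    (hl : l ∈ Ioo (0:ℝ) 1) (hl' : l' ∈ Ioo (0:ℝ) 1)
    (hld : l ≤ d) (hd1 : d ≤ 1) (hld' : l' ≤ d') (hd1' : d' ≤ 1)
    (p p' : ℝ → ℝ)
    (hpdef : p = fun x => if x < t then l else if x = t then d else 1)
    (hp'def : p' = fun x => if x < t then l' else if x = t then d' else 1)
    (hfrac : ∫ x, p x ∂μ = (1 + zt)/2) (hfrac' : ∫ x, p' x ∂μ = (1 + zt)/2)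
    (hgain : 2 * ∫ x, x * p x ∂μ = xzt) (hgain' : 2 * ∫ x, x * p' x ∂μ = xzt) :
    p =ᵐ[μ] p' := by
  classical
  set a := l - l' with ha_def
  set b := d - d' with hb_def
  have hSm : MeasurableSet (Iio t) := measurableSet_Iio
  have hTm : MeasurableSet ({t} : Set ℝ) := measurableSet_singleton t
  -- integrability of x
  have hx_int : Integrable (fun x : ℝ => x) μ := by
    refine ((integrable_const (1:ℝ)).add hint2).mono'
      measurable_id.aestronglyMeasurable (ae_of_all _ fun x => ?_)
    have h1 : ‖x‖ = |x| := rfl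
    rw [h1]
    simp only [Pi.add_apply]
    nlinarith [abs_nonneg x, sq_abs x, sq_nonneg (|x| - 1)]
  -- measurability of p, p'
  have hmp : Measurable p := by
    rw [hpdef]
    exact Measurable.ite hSm measurable_const
      (Measurable.ite (measurableSet_eq) measurable_const measurable_const)
  have hmp' : Measurable p' := by
    rw [hp'def]
    exact Measurable.ite hSm measurable_const
      (Measurable.ite (measurableSet_eq) measurable_const measurable_const)
  -- integrability of p, p', x*p, x*p'
  have hbound : ∀ (c e : ℝ) (x : ℝ),
      ‖if x < t then c else if x = t then e else (1:ℝ)‖ ≤ |c| + |e| + 1 := by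
    intro c e x
    by_cases h1 : x < t
    · rw [if_pos h1]
      have : ‖c‖ = |c| := rfl
      rw [this]; nlinarith [abs_nonneg e]
    · by_cases h2 : x = t
      · rw [if_neg h1, if_pos h2]
        have : ‖e‖ = |e| := rfl
        rw [this]; nlinarith [abs_nonneg c]
      · rw [if_neg h1, if_neg h2]
        have : ‖(1:ℝ)‖ = 1 := by simp
        rw [this]
        nlinarith [abs_nonneg c, abs_nonneg e]
  have hIp : Integrable p μ := by
    refine (integrable_const (|l| + |d| + 1)).mono'
      hmp.aestronglyMeasurable (ae_of_all _ fun x => ?_)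
    rw [hpdef]; exact hbound l d x
  have hIp' : Integrable p' μ := by
    refine (integrable_const (|l'| + |d'| + 1)).mono'
      hmp'.aestronglyMeasurable (ae_of_all _ fun x => ?_)
    rw [hp'def]; exact hbound l' d' x
  have hIxp : Integrable (fun x => x * p x) μ := by
    refine ((hx_int.abs.const_mul (|l| + |d| + 1))).mono'
      (measurable_id.mul hmp).aestronglyMeasurable (ae_of_all _ fun x => ?_)
    have : ‖x * p x‖ = |x| * |p x| := abs_mul x (p x)
    rw [this, mul_comm (|l| + |d| + 1) |x|]
    have hb := hbound l d x
    rw [hpdef] at *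
    exact mul_le_mul_of_nonneg_left (hbound l d x) (abs_nonneg x)
  have hIxp' : Integrable (fun x => x * p' x) μ := by
    refine ((hx_int.abs.const_mul (|l'| + |d'| + 1))).mono'
      (measurable_id.mul hmp').aestronglyMeasurable (ae_of_all _ fun x => ?_)
    have : ‖x * p' x‖ = |x| * |p' x| := abs_mul x (p' x)
    rw [this, mul_comm (|l'| + |d'| + 1) |x|]
    rw [hp'def] at *
    exact mul_le_mul_of_nonneg_left (hbound l' d' x) (abs_nonneg x)
  set A := (μ (Iio t)).toReal with hA_def
  set B := (μ ({t} : Set ℝ)).toReal with hB_def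
  set M := ∫ y in Iio t, y ∂μ with hM_def
  -- pointwise decompositions
  have hdiff : (fun x => p x - p' x) =
      fun x => (Iio t).indicator (fun _ => a) x + ({t} : Set ℝ).indicator (fun _ => b) x := by
    funext x
    rw [hpdef, hp'def]
    by_cases h1 : x < t
    · have hne : x ≠ t := ne_of_lt h1
      simp [h1, indicator, mem_Iio, hne, ha_def]
    · by_cases h2 : x = t
      · simp [h1, h2, indicator, mem_Iio, hb_def]
      · simp [h1, h2, indicator, mem_Iio, mem_singleton_iff]
  have hxdiff : (fun x => x * p x - x * p' x) =
      fun x => (Iio t).indicator (fun y => y * a) x + ({t} : Set ℝ).indicator (fun y => y * b) x := by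
    funext x
    rw [hpdef, hp'def]
    by_cases h1 : x < t
    · have hne : x ≠ t := ne_of_lt h1
      simp [h1, indicator, mem_Iio, hne, ha_def]; ring
    · by_cases h2 : x = t
      · simp [h1, h2, indicator, mem_Iio, hb_def]; ring
      · simp [h1, h2, indicator, mem_Iio, mem_singleton_iff]
  -- first moment equation
  have E1 : a * A + b * B = 0 := by
    have h0 : ∫ x, (p x - p' x) ∂μ = 0 := by
      rw [integral_sub hIp hIp', hfrac, hfrac']; ring
    rw [show (fun x => p x - p' x) = _ from hdiff] at h0
    rw [integral_add ((integrable_const a).indicator hSm)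
      ((integrable_const b).indicator hTm),
      integral_indicator_const a hSm, integral_indicator_const b hTm] at h0
    simp only [smul_eq_mul] at h0
    change (μ (Iio t)).toReal * a + (μ ({t} : Set ℝ)).toReal * b = 0 at h0
    linarith
  -- second moment equation
  have hsingle : ∫ y in ({t} : Set ℝ), y * b ∂μ = B * (t * b) := by
    have : ∫ y in ({t} : Set ℝ), y * b ∂μ = ∫ _ in ({t} : Set ℝ), t * b ∂μ := by
      refine setIntegral_congr_fun hTm fun y hy => ?_
      rw [mem_singleton_iff] at hy; rw [hy]
    rw [this, setIntegral_const, smul_eq_mul]; rfl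
  have E2 : a * M + b * (t * B) = 0 := by
    have h0 : ∫ x, (x * p x - x * p' x) ∂μ = 0 := by
      rw [integral_sub hIxp hIxp']; linarith
    rw [show (fun x => x * p x - x * p' x) = _ from hxdiff] at h0
    have hi1 : Integrable ((Iio t).indicator (fun y : ℝ => y * a)) μ :=
      (hx_int.mul_const a).indicator hSm
    have hi2 : Integrable (({t} : Set ℝ).indicator (fun y : ℝ => y * b)) μ :=
      (hx_int.mul_const b).indicator hTm
    rw [integral_add hi1 hi2, integral_indicator hSm, integral_indicator hTm,
      integral_mul_const, hsingle] at h0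
    linarith
  -- derive the key dichotomies
  have key : (a = 0 ∨ μ (Iio t) = 0) ∧ (b = 0 ∨ μ ({t} : Set ℝ) = 0) := by
    have hBzero : B = 0 ↔ μ ({t} : Set ℝ) = 0 := by
      rw [hB_def, ENNReal.toReal_eq_zero_iff]
      simp [measure_ne_top μ]
    by_cases hS0 : μ (Iio t) = 0
    · have hA0 : A = 0 := by rw [hA_def, hS0]; simp
      constructor
      · right; exact hS0
      · rcases mul_eq_zero.mp (by rw [hA0] at E1; linarith : b * B = 0) with h | h
        · left; exact h
        · right; exact hBzero.mp h
    · have hApos : 0 < A := ENNReal.toReal_pos hS0 (measure_ne_top μ _)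
      have hMlt : M < t * A := by
        have hpos : 0 < ∫ y in Iio t, (t - y) ∂μ := by
          have hnn : 0 ≤ᵐ[μ.restrict (Iio t)] fun y => t - y :=
            (ae_restrict_iff' hSm).mpr (ae_of_all _ fun y hy => by
              simp only [Pi.zero_apply]
              rw [mem_Iio] at hy; linarith)
          have hio : IntegrableOn (fun y => t - y) (Iio t) μ :=
            ((integrable_const t).sub hx_int).integrableOn
          rw [setIntegral_pos_iff_support_of_nonneg_ae hnn hio]
          have hsub : Iio t ⊆ Function.support (fun y => t - y) := by
            intro y hy
            rw [mem_Iio] at hy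
            simp [Function.mem_support]
            intro h; linarith
          have : Function.support (fun y => t - y) ∩ Iio t = Iio t :=
            inter_eq_self_of_subset_right hsub
          rw [this]
          exact pos_iff_ne_zero.mpr hS0
        have hsplit : ∫ y in Iio t, (t - y) ∂μ = t * A - M := by
          rw [integral_sub (integrable_const t).integrableOn hx_int.integrableOn,
            setIntegral_const, smul_eq_mul]
          change A * t - M = t * A - M
          ring_nf
        linarith [hsplit ▸ hpos]
      have ha0 : a = 0 := by
        have : a * (M - t * A) = 0 := by linear_combination E2 - t * E1
        rcases mul_eq_zero.mp this with h | h
        · exact h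
        · exfalso; linarith
      constructor
      · left; exact ha0
      · rcases mul_eq_zero.mp (by rw [ha0] at E1; linarith : b * B = 0) with h | h
        · left; exact h
        · right; exact hBzero.mp h
  -- conclude a.e. equality
  obtain ⟨ha', hb'⟩ := key
  have hsub : {x | p x ≠ p' x} ⊆
      {x | x < t ∧ l ≠ l'} ∪ {x | x = t ∧ d ≠ d'} := by
    intro x hx
    simp only [mem_setOf_eq] at hx
    by_cases h1 : x < t
    · left
      refine ⟨h1, fun heq => hx ?_⟩
      rw [hpdef, hp'def]; simp [h1, heq]
    · by_cases h2 : x = t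
      · right
        refine ⟨h2, fun heq => hx ?_⟩
        rw [hpdef, hp'def]; simp [h1, h2, heq]
      · exfalso; apply hx
        rw [hpdef, hp'def]; simp [h1, h2]
  have hn1 : μ {x | x < t ∧ l ≠ l'} = 0 := by
    rcases ha' with h | h
    · have : l = l' := by rw [ha_def] at h; linarith
      have : {x | x < t ∧ l ≠ l'} = ∅ := by
        ext x; simp [this]
      rw [this]; simp
    · exact measure_mono_null (fun x hx => hx.1) h
  have hn2 : μ {x | x = t ∧ d ≠ d'} = 0 := by
    rcases hb' with h | h
    · have : d = d' := by rw [hb_def] at h; linarith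
      have : {x | x = t ∧ d ≠ d'} = ∅ := by
        ext x; simp [this]
      rw [this]; simp
    · exact measure_mono_null (fun x hx => hx.1) h
  have hnull : μ {x | p x ≠ p' x} = 0 :=
    measure_mono_null hsub (measure_union_null hn1 hn2)
  exact hnull
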